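/- Let (A, Φ, φ) be a C*-dynamical system with GNS representation (H_φ, π_φ, Ω_φ), and let Φ₀ : A → B(H_φ) be given by Φ₀(a) = π_φ(Φ(a)) with Stinespring representation (V₀, σ₁, L₁). Then there exists a linear isometry Λ₀ : H_φ → L₁ with Λ₀ π_φ(a)Ω_φ = a ⊗_{Φ₀} Ω_φ for all a ∈ A, satisfying σ₁(a)Λ₀ = Λ₀π_φ(a) for all a ∈ A, and the GNS contraction factorizes as U_{Φ,φ} = V₀* Λ₀. -/

import Mathlib

open ContinuousLinearMap
open scoped ComplexOrder

/-- Complete positivity of a linear map between star-ordered `ℂ`-algebras. -/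
def IsCompletelyPositive {A B : Type*} [Ring A] [StarRing A] [Algebra ℂ A]
    [Ring B] [StarRing B] [PartialOrder B] [Algebra ℂ B]
    (Φ : A →ₗ[ℂ] B) : Prop :=
  ∀ (n : ℕ) (a : Fin n → A) (c : Fin n → B),
    0 ≤ ∑ i : Fin n, ∑ j : Fin n, star (c i) * Φ (star (a i) * a j) * c j

/-- let `(A, Φ, φ)` be a C*-dynamical system with GNS triple `(H, π, Ω)` and
let `(V₀, σ₁, L₁)` be the Stinespring representation of `Φ₀ = π ∘ Φ` (so that
`a ⊗_{Φ₀} Ω = σ₁(a) V₀ Ω`). Then there is a linear isometry `Λ₀ : H → L₁` with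
`Λ₀ π(a)Ω = a ⊗_{Φ₀} Ω`, `σ₁(a)Λ₀ = Λ₀ π(a)` for all `a`, and the GNS contraction
`U_{Φ,φ}` factorizes as `U_{Φ,φ} = V₀* Λ₀`. -/
theorem statement9 {A H L1 : Type*} [NormedRing A] [StarRing A] [CStarRing A]
    [PartialOrder A] [StarOrderedRing A] [NormedAlgebra ℂ A] [StarModule ℂ A]
    [CompleteSpace A]
    [NormedAddCommGroup H] [InnerProductSpace ℂ H] [CompleteSpace H]
    [NormedAddCommGroup L1] [InnerProductSpace ℂ L1] [CompleteSpace L1]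
    (φ : A →ₗ[ℂ] ℂ) (hφ1 : φ 1 = 1) (hφpos : ∀ a : A, 0 ≤ φ (star a * a))
    (Φ : A →ₗ[ℂ] A) (hΦ1 : Φ 1 = 1) (hΦcp : IsCompletelyPositive Φ)
    (hinv : ∀ a, φ (Φ a) = φ a)
    (π : A →⋆ₐ[ℂ] (H →L[ℂ] H)) (Ω : H)
    (hGNS : ∀ a, φ a = (inner ℂ Ω (π a Ω) : ℂ))
    (hcyc : (Submodule.span ℂ (Set.range fun a : A => π a Ω)).topologicalClosure = ⊤)
    (σ1 : A →⋆ₐ[ℂ] (L1 →L[ℂ] L1)) (V0 : H →L[ℂ] L1) (hV0 : ∀ h, ‖V0 h‖ = ‖h‖)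
    (hSt : ∀ a, π (Φ a) = adjoint V0 ∘L (σ1 a ∘L V0))
    (U : H →L[ℂ] H) (hUnorm : ‖U‖ ≤ 1) (hU : ∀ a : A, U (π a Ω) = π (Φ a) Ω) :
    ∃ Λ : H →L[ℂ] L1, (∀ h, ‖Λ h‖ = ‖h‖) ∧
      (∀ a : A, Λ (π a Ω) = σ1 a (V0 Ω)) ∧
      (∀ a : A, σ1 a ∘L Λ = Λ ∘L π a) ∧
      U = adjoint V0 ∘L Λ := by
  -- key inner product identity
  have key : ∀ a b : A, (inner ℂ (σ1 a (V0 Ω)) (σ1 b (V0 Ω)) : ℂ) = inner ℂ (π a Ω) (π b Ω) := by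
    intro a b
    have h1 : σ1 (star a) = adjoint (σ1 a) := by rw [map_star, star_eq_adjoint]
    have h2 : π (star a) = adjoint (π a) := by rw [map_star, star_eq_adjoint]
    calc (inner ℂ (σ1 a (V0 Ω)) (σ1 b (V0 Ω)) : ℂ)
        = inner ℂ (V0 Ω) (σ1 (star a * b) (V0 Ω)) := by
          rw [map_mul, mul_apply_eq_comp, h1, adjoint_inner_right]
      _ = inner ℂ Ω ((adjoint V0) (σ1 (star a * b) (V0 Ω))) := by
          rw [adjoint_inner_right]
      _ = inner ℂ Ω (π (Φ (star a * b)) Ω) := by rw [hSt]; rfl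
      _ = φ (Φ (star a * b)) := (hGNS _).symm
      _ = φ (star a * b) := hinv _
      _ = inner ℂ Ω (π (star a * b) Ω) := hGNS _
      _ = inner ℂ (π a Ω) (π b Ω) := by
          rw [map_mul, mul_apply_eq_comp, h2, adjoint_inner_right]
  -- linear maps a ↦ π a Ω and a ↦ σ1 a (V0 Ω)
  set g : A →ₗ[ℂ] H :=
    { toFun := fun a => π a Ω
      map_add' := fun a b => by simp [map_add]
      map_smul' := fun c a => by simp [map_smul] } with hg
  set f₀ : A →ₗ[ℂ] L1 :=
    { toFun := fun a => σ1 a (V0 Ω)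
      map_add' := fun a b => by simp [map_add]
      map_smul' := fun c a => by simp [map_smul] } with hf₀
  have hnorm : ∀ a : A, ‖f₀ a‖ = ‖g a‖ := by
    intro a
    have h := key a a
    rw [norm_eq_sqrt_re_inner (𝕜 := ℂ), norm_eq_sqrt_re_inner (𝕜 := ℂ)]
    simp only [hg, hf₀, LinearMap.coe_mk, AddHom.coe_mk]
    rw [h]
  have hker : LinearMap.ker g ≤ LinearMap.ker f₀ := by
    intro a ha
    rw [LinearMap.mem_ker] at ha ⊢
    have h := hnorm a
    rw [ha, norm_zero] at h
    exact norm_eq_zero.mp h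
  -- quotient construction of Λ₀ on range g
  set L : (A ⧸ LinearMap.ker g) →ₗ[ℂ] L1 := (LinearMap.ker g).liftQ f₀ hker with hL
  set e := g.quotKerEquivRange with he
  set Λ₀ : LinearMap.range g →ₗ[ℂ] L1 := L.comp e.symm.toLinearMap with hΛ₀def
  have hΛ₀ : ∀ a : A, Λ₀ ⟨g a, LinearMap.mem_range_self g a⟩ = f₀ a := by
    intro a
    have hea : e (Submodule.Quotient.mk a) = ⟨g a, LinearMap.mem_range_self g a⟩ := by
      apply Subtype.ext
      simp [he, LinearMap.quotKerEquivRange]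
    have hsy : e.symm ⟨g a, LinearMap.mem_range_self g a⟩ = Submodule.Quotient.mk a := by
      rw [← hea, LinearEquiv.symm_apply_apply]
    simp only [hΛ₀def, LinearMap.comp_apply, LinearEquiv.coe_toLinearMap, hsy]
    exact Submodule.liftQ_apply _ _ _
  have hΛ₀norm : ∀ x : LinearMap.range g, ‖Λ₀ x‖ = ‖x‖ := by
    rintro ⟨x, a, rfl⟩
    rw [hΛ₀ a, hnorm a]
    rfl
  -- Λ₀ as a linear isometry on the submodule
  set li : LinearMap.range g →ₗᵢ[ℂ] L1 := ⟨Λ₀, hΛ₀norm⟩ with hli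
  -- density of range g
  have hrange : (Submodule.span ℂ (Set.range fun a : A => π a Ω)) = LinearMap.range g := by
    rw [show (Set.range fun a : A => π a Ω) = Set.range ⇑g from rfl, ← LinearMap.coe_range,
      Submodule.span_eq]
  have hDense : Dense ((LinearMap.range g : Submodule ℂ H) : Set H) := by
    rw [← hrange, Submodule.dense_iff_topologicalClosure_eq_top]
    exact hcyc
  have hdense : DenseRange ((LinearMap.range g).subtypeL : LinearMap.range g →L[ℂ] H) := by
    have : DenseRange ((↑) : LinearMap.range g → H) :=
      (denseRange_subtype_val).mpr hDense
    exact this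
  have hui : IsUniformInducing ((LinearMap.range g).subtypeL : LinearMap.range g →L[ℂ] H) :=
    isometry_subtype_coe.isUniformInducing
  -- extend to all of H
  set Λ : H →L[ℂ] L1 :=
    (li.toContinuousLinearMap).extend (LinearMap.range g).subtypeL with hΛ
  have hΛapp : ∀ x : LinearMap.range g, Λ (x : H) = Λ₀ x := fun x =>
    ContinuousLinearMap.extend_eq _ hdense hui x
  have hΛg : ∀ a : A, Λ (g a) = f₀ a := by
    intro a
    have := hΛapp ⟨g a, LinearMap.mem_range_self g a⟩
    rw [this, hΛ₀ a]
  refine ⟨Λ, ?_, ?_, ?_, ?_⟩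
  · -- isometry on all of H, by density
    intro h
    refine hdense.induction_on h ?_ ?_
    · exact isClosed_eq (continuous_norm.comp Λ.continuous) continuous_norm
    · intro x
      show ‖Λ (x : H)‖ = ‖(x : H)‖
      rw [hΛapp x]
      exact hΛ₀norm x
  · intro a
    exact hΛg a
  · intro a
    have hs : Dense ((Submodule.span ℂ (Set.range fun b : A => π b Ω) : Submodule ℂ H) : Set H) := by
      rw [hrange]; exact hDense
    refine ContinuousLinearMap.ext_on hs ?_
    rintro x ⟨b, rfl⟩
    simp only [ContinuousLinearMap.comp_apply]
    have h1 : Λ (π b Ω) = σ1 b (V0 Ω) := hΛg b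
    have h2 : Λ (π (a * b) Ω) = σ1 (a * b) (V0 Ω) := hΛg (a * b)
    rw [h1]
    have : (π a) (π b Ω) = π (a * b) Ω := by rw [map_mul, mul_apply_eq_comp]
    rw [this, h2, map_mul, mul_apply_eq_comp]
  · have hs : Dense ((Submodule.span ℂ (Set.range fun b : A => π b Ω) : Submodule ℂ H) : Set H) := by
      rw [hrange]; exact hDense
    refine ContinuousLinearMap.ext_on hs ?_
    rintro x ⟨a, rfl⟩
    simp only [ContinuousLinearMap.comp_apply]
    rw [show Λ ((π a) Ω) = σ1 a (V0 Ω) from hΛg a, hU a, hSt a]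
    rfl
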